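/- Let $T'$ be a finite subtree of the full rooted ternary tree of depth $n$ (containing the root, with leaves among the depth-$n$ vertices). Remove each edge of $T'$ independently with probability $1/2$, and let $P(T')$ be the probability that a path of retained edges connects the root to some depth-$n$ vertex of $T'$. Assign to each edge of $T'$ joining a depth-$(k-1)$ vertex to a depth-$k$ vertex the resistance $2^k$, and let $R(T')$ be the effective electrical resistance between the root and the set of depth-$n$ vertices. Then $P(T') \le \frac{12}{2 + R(T')}$. -/

import Mathlib

open scoped ENNReal Classical

/-- A subtree of the rooted ternary tree of depth `n`: vertices are ternary
strings (lists over `Fin 3`), it contains the root (the empty string), is closed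
under taking prefixes, and has depth at most `n`. -/
def IsSubtree (n : ℕ) (T : List (Fin 3) → Prop) : Prop :=
  T [] ∧ (∀ l a, T (l ++ [a]) → T l) ∧ ∀ l, T l → l.length ≤ n

/-- The edges of the full rooted ternary tree of depth `n`, indexed by their
lower endpoint: the edge at depth `k+1` is determined by a vertex at depth
`k+1`, i.e. a string of length `k+1`. -/
def TernaryEdges (n : ℕ) := Σ k : Fin n, (Fin (k + 1) → Fin 3)

/-- The percolation configuration `ω` (`true` = edge retained) admits a fully
retained path from the root to a depth-`n` vertex of `T`. -/
def Survives (n : ℕ) (T : List (Fin 3) → Prop) (ω : TernaryEdges n → Bool) : Prop :=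
  ∃ s : Fin n → Fin 3, T (List.ofFn s) ∧
    ∀ k : Fin n, ω ⟨k, fun i => s (Fin.castLE k.isLt i)⟩ = true

/-- The survival probability of Bernoulli(1/2) bond percolation on the subtree
`T` of the depth-`n` ternary tree: each edge is removed independently with
probability 1/2 (configurations are uniform), and we ask for a retained path
from the root to depth `n`. -/
noncomputable def survivalProb (n : ℕ) (T : List (Fin 3) → Prop) : ℝ :=
  (Nat.card {ω : TernaryEdges n → Bool // Survives n T ω} : ℝ) /
    (Nat.card (TernaryEdges n → Bool) : ℝ)

/-- Effective electrical resistance from a vertex `v` (at depth `v.length`) to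
depth `v.length + d` in the subtree `T`, where each edge joining depth `k-1` to
depth `k` has resistance `2 ^ k`, computed by the series-parallel recursion;
empty branches contribute resistance `∞` (i.e. conductance `0`). -/
noncomputable def resistAux (T : List (Fin 3) → Prop) : ℕ → List (Fin 3) → ℝ≥0∞
  | 0, _ => 0
  | d + 1, v =>
      (∑ a : Fin 3, if T (v ++ [a]) then
        ((2 : ℝ≥0∞) ^ (v.length + 1) + resistAux T d (v ++ [a]))⁻¹ else 0)⁻¹

/-- The effective resistance between the root and the depth-`n` vertices. -/
noncomputable def resist (n : ℕ) (T : List (Fin 3) → Prop) : ℝ≥0∞ :=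
  resistAux T n []

-- ===== auxiliary development =====

/-- the subtree rooted at child `a`. -/
def childT (a : Fin 3) (T : List (Fin 3) → Prop) : List (Fin 3) → Prop := fun l => T (a :: l)

/-- prefix-closedness -/
def PC (T : List (Fin 3) → Prop) : Prop := ∀ l a, T (l ++ [a]) → T l

lemma PC.child {T} (h : PC T) (a : Fin 3) : PC (childT a T) := by
  intro l b hl
  exact h (a :: l) b hl

lemma PC.prefix {T} (h : PC T) (l l' : List (Fin 3)) (hl : T (l ++ l')) : T l := by
  induction l' using List.reverseRecOn with
  | nil => simpa using hl
  | append_singleton l'' b ih =>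
    apply ih
    apply h (l ++ l'') b
    simpa [List.append_assoc] using hl

/-- normalized conductance `σ = 2^k/(2^k + R)` of a subtree of remaining depth `d`. -/
noncomputable def sig : ℕ → (List (Fin 3) → Prop) → ℝ
  | 0, _ => 1
  | d + 1, T =>
      (∑ a : Fin 3, if T [a] then sig d (childT a T) else 0) /
        (2 + ∑ a : Fin 3, if T [a] then sig d (childT a T) else 0)

lemma sig_nonneg : ∀ d T, 0 ≤ sig d T
  | 0, T => by norm_num [sig]
  | d + 1, T => by
    have h : 0 ≤ ∑ a : Fin 3, if T [a] then sig d (childT a T) else 0 := by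
      apply Finset.sum_nonneg
      intro a _
      split
      · exact sig_nonneg d _
      · exact le_rfl
    simp only [sig]
    positivity

lemma sig_le_one : ∀ d T, sig d T ≤ 1
  | 0, T => by norm_num [sig]
  | d + 1, T => by
    have h : 0 ≤ ∑ a : Fin 3, if T [a] then sig d (childT a T) else 0 := by
      apply Finset.sum_nonneg
      intro a _
      split
      · exact sig_nonneg d _
      · exact le_rfl
    simp only [sig]
    rw [div_le_one (by linarith)]
    linarith

/-- restrict a configuration on the depth-(m+1) tree to the subtree at child `a`. -/
def restrictConf {m : ℕ} (a : Fin 3) (ω : TernaryEdges (m + 1) → Bool) :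
    TernaryEdges m → Bool :=
  fun e => ω ⟨⟨(e.1 : ℕ) + 1, Nat.succ_lt_succ e.1.isLt⟩, Fin.cons a e.2⟩

/-- rebuild a configuration from root bits and child configurations. -/
def unConf {m : ℕ} (b : Fin 3 → Bool) (f : Fin 3 → TernaryEdges m → Bool) :
    TernaryEdges (m + 1) → Bool
  | ⟨⟨0, _⟩, g⟩ => b (g ⟨0, Nat.zero_lt_succ 0⟩)
  | ⟨⟨j + 1, hj⟩, g⟩ =>
      f (g ⟨0, Nat.zero_lt_succ _⟩)
        ⟨⟨j, Nat.lt_of_succ_lt_succ hj⟩, fun i => g ⟨(i : ℕ) + 1, Nat.succ_lt_succ i.isLt⟩⟩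

def confEquiv (m : ℕ) :
    (TernaryEdges (m + 1) → Bool) ≃ ((Fin 3 → Bool) × (Fin 3 → TernaryEdges m → Bool)) where
  toFun ω := (fun a => ω ⟨⟨0, Nat.succ_pos m⟩, fun _ => a⟩, fun a => restrictConf a ω)
  invFun p := unConf p.1 p.2
  left_inv ω := by
    funext e
    obtain ⟨⟨k, hk⟩, g⟩ := e
    cases k with
    | zero =>
      show ω _ = ω _
      congr 1
      refine Sigma.ext rfl ?_
      simp only [heq_eq_eq]
      funext i
      congr 1
      have h2 : (i : ℕ) < 1 := i.isLt
      exact Fin.ext (by omega)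
    | succ j =>
      show ω _ = ω _
      congr 1
      refine Sigma.ext rfl ?_
      simp only [heq_eq_eq]
      funext i
      induction i using Fin.cases with
      | zero =>
        rw [Fin.cons_zero]
        congr 1
      | succ i =>
        rw [Fin.cons_succ]
        congr 1
  right_inv p := by
    obtain ⟨b, f⟩ := p
    refine Prod.ext ?_ ?_
    · funext a
      rfl
    · funext a e
      obtain ⟨⟨j, hj⟩, g⟩ := e
      show f _ _ = f a ⟨⟨j, hj⟩, g⟩
      congr 1

lemma survives_succ (m : ℕ) (T : List (Fin 3) → Prop) (ω : TernaryEdges (m + 1) → Bool) :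
    Survives (m + 1) T ω ↔ ∃ a : Fin 3,
      ω ⟨⟨0, Nat.succ_pos m⟩, fun _ => a⟩ = true ∧
      Survives m (childT a T) (restrictConf a ω) := by
  constructor
  · rintro ⟨s, hs, he⟩
    refine ⟨s 0, ?_, Fin.tail s, ?_, ?_⟩
    · have h0 := he ⟨0, Nat.succ_pos m⟩
      have hf : (fun i : Fin (0 + 1) => s (Fin.castLE (Nat.succ_pos m) i)) = fun _ => s 0 := by
        funext i
        congr 1
        apply Fin.ext
        have := i.isLt
        simp only [Fin.coe_castLE, Fin.val_zero]
        omega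
      rw [hf] at h0
      exact h0
    · rw [List.ofFn_succ] at hs
      exact hs
    · intro k
      show ω ⟨⟨(k : ℕ) + 1, Nat.succ_lt_succ k.isLt⟩, Fin.cons (s 0) _⟩ = true
      have key : Fin.cons (s 0) (fun i : Fin ((k : ℕ) + 1) => Fin.tail s (Fin.castLE k.isLt i))
          = (fun i : Fin ((k : ℕ) + 1 + 1) => s (Fin.castLE (Nat.succ_lt_succ k.isLt) i)) := by
        funext i
        induction i using Fin.cases with
        | zero =>
          rw [Fin.cons_zero]
          congr 1
        | succ i =>
          rw [Fin.cons_succ]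
          show s _ = s _
          congr 1
      rw [key]
      exact he ⟨(k : ℕ) + 1, Nat.succ_lt_succ k.isLt⟩
  · rintro ⟨a, hroot, s', hs', he'⟩
    refine ⟨(Fin.cons a s' : Fin (m + 1) → Fin 3), ?_, ?_⟩
    · rw [List.ofFn_succ]
      simpa [Fin.cons_zero, Fin.cons_succ, childT] using hs'
    · intro k
      obtain ⟨k, hk⟩ := k
      cases k with
      | zero =>
        have hf : (fun i : Fin (0 + 1) => (Fin.cons a s' : Fin (m + 1) → Fin 3) (Fin.castLE hk i)) = fun _ => a := by
          funext i
          have h1 : Fin.castLE hk i = (0 : Fin (m + 1)) := by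
            apply Fin.ext
            have := i.isLt
            simp only [Fin.coe_castLE, Fin.val_zero]
            omega
          rw [h1, Fin.cons_zero]
        show ω ⟨⟨0, hk⟩, _⟩ = true
        rw [hf]
        exact hroot
      | succ j =>
        have h0 := he' ⟨j, Nat.lt_of_succ_lt_succ hk⟩
        show ω ⟨⟨j + 1, hk⟩, fun i => (Fin.cons a s' : Fin (m + 1) → Fin 3) (Fin.castLE hk i)⟩ = true
        have key : (fun i : Fin (j + 1 + 1) => (Fin.cons a s' : Fin (m + 1) → Fin 3) (Fin.castLE hk i))
            = Fin.cons a (fun i : Fin (j + 1) =>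
                s' (Fin.castLE (Nat.lt_of_succ_lt_succ hk) i)) := by
          funext i
          induction i using Fin.cases with
          | zero =>
            rw [Fin.cons_zero]
            have h1 : Fin.castLE hk (0 : Fin (j + 1 + 1)) = (0 : Fin (m + 1)) := by
              apply Fin.ext
              simp
            rw [h1, Fin.cons_zero]
          | succ i =>
            rw [Fin.cons_succ]
            have h1 : Fin.castLE hk i.succ
                = (Fin.castLE (Nat.lt_of_succ_lt_succ hk) i).succ := by
              apply Fin.ext
              simp
            rw [h1, Fin.cons_succ]
        rw [key]
        exact h0

instance ternaryEdgesFintype (n : ℕ) : Fintype (TernaryEdges n) := by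
  unfold TernaryEdges; infer_instance

instance ternaryEdgesDecEq (n : ℕ) : DecidableEq (TernaryEdges n) := by
  unfold TernaryEdges; infer_instance

lemma card_conf_pos (n : ℕ) : 0 < Nat.card (TernaryEdges n → Bool) := Nat.card_pos

/-- the key recursion for the survival probability. -/
lemma survivalProb_succ (m : ℕ) (T : List (Fin 3) → Prop) :
    survivalProb (m + 1) T = 1 - ∏ a : Fin 3, (1 - survivalProb m (childT a T) / 2) := by
  classical
  set C := TernaryEdges m → Bool with hC
  set N : Fin 3 → ℕ := fun a => Nat.card {ω : C // Survives m (childT a T) ω} with hN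
  set M : ℕ := Nat.card C with hM
  -- card of the non-surviving configurations
  have h1 : Nat.card {ω : TernaryEdges (m + 1) → Bool // ¬ Survives (m + 1) T ω}
      = ∏ a : Fin 3, (2 * M - N a) := by
    have e1 : {ω : TernaryEdges (m + 1) → Bool // ¬ Survives (m + 1) T ω}
        ≃ {p : (Fin 3 → Bool) × (Fin 3 → C) //
            ∀ a, ¬ (p.1 a = true ∧ Survives m (childT a T) (p.2 a))} := by
      refine Equiv.subtypeEquiv (confEquiv m) fun ω => ?_
      exact (not_congr (survives_succ m T ω)).trans not_exists
    have e2 : {p : (Fin 3 → Bool) × (Fin 3 → C) //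
            ∀ a, ¬ (p.1 a = true ∧ Survives m (childT a T) (p.2 a))}
        ≃ {x : Fin 3 → Bool × C //
            ∀ a, ¬ ((x a).1 = true ∧ Survives m (childT a T) (x a).2)} := by
      refine Equiv.subtypeEquiv (Equiv.arrowProdEquivProdArrow (Fin 3) (fun _ => Bool) (fun _ => C)).symm fun p => ?_
      rfl
    have e3 : {x : Fin 3 → Bool × C //
            ∀ a, ¬ ((x a).1 = true ∧ Survives m (childT a T) (x a).2)}
        ≃ ∀ a : Fin 3, {y : Bool × C // ¬ (y.1 = true ∧ Survives m (childT a T) y.2)} :=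
      Equiv.subtypePiEquivPi (β := fun _ : Fin 3 => Bool × C) (p := fun a y => ¬ (y.1 = true ∧ Survives m (childT a T) y.2))
    rw [Nat.card_congr (e1.trans (e2.trans e3)), Nat.card_pi]
    refine Finset.prod_congr rfl fun a _ => ?_
    -- per-child count
    have e4 : {y : Bool × C // y.1 = true ∧ Survives m (childT a T) y.2}
        ≃ {ω : C // Survives m (childT a T) ω} := by
      refine ⟨fun y => ⟨y.1.2, y.2.2⟩, fun c => ⟨(true, c.1), rfl, c.2⟩, ?_, ?_⟩
      · rintro ⟨⟨b, c⟩, hb, hc⟩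
        apply Subtype.ext
        show (true, c) = (b, c)
        rw [show b = true from hb]
      · rintro ⟨c, hc⟩
        rfl
    rw [Nat.card_eq_fintype_card, Fintype.card_subtype_compl,
      ← Nat.card_eq_fintype_card, ← Nat.card_eq_fintype_card, Nat.card_congr e4,
      Nat.card_prod]
    have hb2 : Nat.card Bool = 2 := by
      rw [Nat.card_eq_fintype_card, Fintype.card_bool]
    rw [hb2]
  -- total number of configurations
  have hTot : Nat.card (TernaryEdges (m + 1) → Bool) = ∏ _a : Fin 3, (2 * M) := by
    rw [Nat.card_congr (confEquiv m), Nat.card_prod, Nat.card_pi, Nat.card_pi]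
    have hb2 : Nat.card Bool = 2 := by
      rw [Nat.card_eq_fintype_card, Fintype.card_bool]
    simp [hb2, Finset.prod_const]
    have hMval : M = 2 ^ Fintype.card (TernaryEdges m) := by
      rw [hM, Nat.card_eq_fintype_card, Fintype.card_fun, Fintype.card_bool]
    rw [hMval]
    ring
  -- number of surviving configurations
  have hle : Nat.card {ω : TernaryEdges (m + 1) → Bool // Survives (m + 1) T ω}
      ≤ Nat.card (TernaryEdges (m + 1) → Bool) := by
    simp only [Nat.card_eq_fintype_card]
    exact Fintype.card_subtype_le _
  have hcompl : Nat.card {ω : TernaryEdges (m + 1) → Bool // ¬ Survives (m + 1) T ω}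
      = Nat.card (TernaryEdges (m + 1) → Bool)
        - Nat.card {ω : TernaryEdges (m + 1) → Bool // Survives (m + 1) T ω} := by
    simp only [Nat.card_eq_fintype_card]
    exact Fintype.card_subtype_compl _
  have h2 : Nat.card {ω : TernaryEdges (m + 1) → Bool // Survives (m + 1) T ω}
      = Nat.card (TernaryEdges (m + 1) → Bool) - ∏ a : Fin 3, (2 * M - N a) := by
    omega
  -- child survival counts
  have hNle : ∀ a : Fin 3, N a ≤ M := by
    intro a
    simp only [hN, hM, Nat.card_eq_fintype_card]
    exact Fintype.card_subtype_le _
  have hM0 : 0 < M := Nat.card_pos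
  have hprodle : (∏ a : Fin 3, (2 * M - N a)) ≤ ∏ _a : Fin 3, (2 * M) :=
    Finset.prod_le_prod' fun a _ => Nat.sub_le _ _
  have hchild : ∀ a : Fin 3, survivalProb m (childT a T) = (N a : ℝ) / (M : ℝ) := fun a => rfl
  -- now the real computation
  rw [survivalProb, h2, hTot]
  rw [Nat.cast_sub (by rw [← hTot] at hprodle ⊢; exact hprodle)]
  push_cast [Nat.cast_prod]
  have hcast : ∀ a : Fin 3, ((2 * M - N a : ℕ) : ℝ) = 2 * (M : ℝ) - (N a : ℝ) := by
    intro a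
    have : N a ≤ 2 * M := le_trans (hNle a) (by omega)
    push_cast [Nat.cast_sub this]
    ring
  have hMR : (0:ℝ) < (M : ℝ) := by exact_mod_cast hM0
  have hTotR : (0:ℝ) < ∏ _a : Fin 3, (2 * (M:ℝ)) := by positivity
  rw [div_eq_iff (ne_of_gt hTotR)]
  have expand : ∀ a : Fin 3, (1 - survivalProb m (childT a T) / 2) * (2 * (M:ℝ))
      = 2 * (M:ℝ) - (N a : ℝ) := by
    intro a
    rw [hchild a]
    field_simp
  calc (∏ _a : Fin 3, (2 * (M:ℝ))) - ∏ a : Fin 3, ((2 * M - N a : ℕ) : ℝ)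
      = (∏ _a : Fin 3, (2 * (M:ℝ))) - ∏ a : Fin 3, (2 * (M:ℝ) - (N a:ℝ)) := by
        rw [Finset.prod_congr rfl fun a _ => hcast a]
    _ = (∏ _a : Fin 3, (2 * (M:ℝ))) - ∏ a : Fin 3,
          ((1 - survivalProb m (childT a T) / 2) * (2 * (M:ℝ))) := by
        rw [Finset.prod_congr rfl fun a _ => expand a]
    _ = (1 - ∏ a : Fin 3, (1 - survivalProb m (childT a T) / 2)) *
          ∏ _a : Fin 3, (2 * (M:ℝ)) := by
        simp only [Fin.prod_univ_three]
        ring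

lemma survivalProb_nonneg (n : ℕ) (T : List (Fin 3) → Prop) : 0 ≤ survivalProb n T := by
  unfold survivalProb; positivity

lemma survivalProb_le_one (n : ℕ) (T : List (Fin 3) → Prop) : survivalProb n T ≤ 1 := by
  rw [survivalProb, div_le_one (by exact_mod_cast card_conf_pos n)]
  have : Nat.card {ω : TernaryEdges n → Bool // Survives n T ω}
      ≤ Nat.card (TernaryEdges n → Bool) := by
    simp only [Nat.card_eq_fintype_card]
    exact Fintype.card_subtype_le _
  exact_mod_cast this

lemma survivalProb_child_zero (n : ℕ) (T : List (Fin 3) → Prop) (hPC : PC T) (a : Fin 3)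
    (h : ¬ T [a]) : survivalProb n (childT a T) = 0 := by
  have : IsEmpty {ω : TernaryEdges n → Bool // Survives n (childT a T) ω} := by
    constructor
    rintro ⟨ω, s, hs, -⟩
    exact h (hPC.prefix [a] (List.ofFn s) hs)
  rw [survivalProb, Nat.card_of_isEmpty, Nat.cast_zero, zero_div]

/-- the core scalar inequality. -/
lemma star (s1 s2 s3 y1 y2 y3 : ℝ) (hs1 : 0 ≤ s1) (hs2 : 0 ≤ s2) (hs3 : 0 ≤ s3)
    (hy1 : 0 ≤ y1) (hy2 : 0 ≤ y2) (hy3 : 0 ≤ y3)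
    (hb1 : y1 ≤ 1/2) (hb2 : y2 ≤ 1/2) (hb3 : y3 ≤ 1/2)
    (hc1 : y1 * (1 + s1) ≤ 6 * s1) (hc2 : y2 * (1 + s2) ≤ 6 * s2)
    (hc3 : y3 * (1 + s3) ≤ 6 * s3) :
    (1 - (1 - y1) * (1 - y2) * (1 - y3)) * (1 + (s1 + s2 + s3)) ≤ 6 * (s1 + s2 + s3) := by
  nlinarith [mul_nonneg hy1 hy2, mul_nonneg hy1 hy3, mul_nonneg hy2 hy3,
    mul_nonneg (mul_nonneg hy1 hy2) hy3, mul_nonneg hs1 hs2, mul_nonneg hs1 hs3,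
    mul_nonneg hs2 hs3, mul_nonneg hy1 hs2, mul_nonneg hy2 hs3, mul_nonneg hy3 hs1,
    mul_nonneg hy1 hs3, mul_nonneg hy2 hs1, mul_nonneg hy3 hs2]

/-- main induction: survival probability is at most `12 σ / (1 + σ)`. -/
lemma main_ind : ∀ (d : ℕ) (T : List (Fin 3) → Prop), PC T →
    survivalProb d T ≤ 12 * sig d T / (1 + sig d T)
  | 0, T, _ => by
    have h1 : sig 0 T = 1 := rfl
    rw [h1]
    norm_num
    linarith [survivalProb_le_one 0 T]
  | d + 1, T, hPC => by
    set σ : Fin 3 → ℝ := fun a => if T [a] then sig d (childT a T) else 0 with hσ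
    have hσ0 : ∀ a, 0 ≤ σ a := by
      intro a
      rw [hσ]
      dsimp only
      split
      · exact sig_nonneg d _
      · exact le_rfl
    have hp0 : ∀ a : Fin 3, 0 ≤ survivalProb d (childT a T) :=
      fun a => survivalProb_nonneg d _
    have hp1 : ∀ a : Fin 3, survivalProb d (childT a T) ≤ 1 :=
      fun a => survivalProb_le_one d _
    have key : ∀ a, survivalProb d (childT a T) / 2 * (1 + σ a) ≤ 6 * σ a := by
      intro a
      rw [hσ]
      dsimp only
      split
      · rename_i hTa
        have ih := main_ind d (childT a T) (hPC.child a)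
        have hs0 : 0 ≤ sig d (childT a T) := sig_nonneg d _
        have hs1 : (0:ℝ) < 1 + sig d (childT a T) := by linarith
        rw [le_div_iff₀ hs1] at ih
        linarith
      · rename_i hTa
        rw [survivalProb_child_zero d T hPC a hTa]
        norm_num
    have hSig : sig (d + 1) T = (σ 0 + σ 1 + σ 2) / (2 + (σ 0 + σ 1 + σ 2)) := by
      simp only [sig, Fin.sum_univ_three]
      rfl
    set Sg : ℝ := σ 0 + σ 1 + σ 2 with hSgdef
    have hSg0 : 0 ≤ Sg := by
      have := hσ0 0; have := hσ0 1; have := hσ0 2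
      rw [hSgdef]; linarith
    have h2Sg : (0:ℝ) < 2 + Sg := by linarith
    have h1Sg : (0:ℝ) < 1 + Sg := by linarith
    have target_eq : 12 * sig (d + 1) T / (1 + sig (d + 1) T) = 6 * Sg / (1 + Sg) := by
      rw [hSig]
      rw [div_eq_div_iff (by positivity) (ne_of_gt h1Sg)]
      · field_simp
        ring
    rw [survivalProb_succ, Fin.prod_univ_three, target_eq,
      le_div_iff₀ h1Sg]
    have hst := star (σ 0) (σ 1) (σ 2) (survivalProb d (childT 0 T) / 2)
      (survivalProb d (childT 1 T) / 2) (survivalProb d (childT 2 T) / 2)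
      (hσ0 0) (hσ0 1) (hσ0 2)
      (by linarith [hp0 0]) (by linarith [hp0 1]) (by linarith [hp0 2])
      (by linarith [hp1 0]) (by linarith [hp1 1]) (by linarith [hp1 2])
      (key 0) (key 1) (key 2)
    linarith [hst]

lemma bridge : ∀ (d : ℕ) (T : List (Fin 3) → Prop) (v : List (Fin 3)),
    ENNReal.ofReal (sig d (fun l => T (v ++ l)))
      = 2 ^ v.length / (2 ^ v.length + resistAux T d v)
  | 0, T, v => by
    show ENNReal.ofReal (1 : ℝ) = 2 ^ v.length / (2 ^ v.length + resistAux T 0 v)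
    rw [show resistAux T 0 v = 0 from rfl, add_zero,
      ENNReal.div_self (by positivity) (ENNReal.pow_ne_top ENNReal.ofNat_ne_top),
      ENNReal.ofReal_one]
  | d + 1, T, v => by
    set k := v.length with hk
    -- identify children subtrees
    have hch : ∀ a : Fin 3, childT a (fun l => T (v ++ l)) = fun l => T ((v ++ [a]) ++ l) := by
      intro a
      funext l
      show T (v ++ (a :: l)) = T ((v ++ [a]) ++ l)
      rw [List.append_assoc]
      rfl
    set S : ℝ := ∑ a : Fin 3, if T (v ++ [a]) then sig d (fun l => T ((v ++ [a]) ++ l)) else 0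
      with hS
    have hsum : (∑ a : Fin 3, if T (v ++ [a]) then
        sig d (childT a (fun l => T (v ++ l))) else 0) = S := by
      rw [hS]
      refine Finset.sum_congr rfl fun a _ => ?_
      rw [hch a]
    have hsig : sig (d + 1) (fun l => T (v ++ l)) = S / (2 + S) := by
      simp only [sig]
      rw [hsum]
    have hS0 : 0 ≤ S := by
      rw [hS]
      refine Finset.sum_nonneg fun a _ => ?_
      split
      · exact sig_nonneg d _
      · exact le_rfl
    set C : ℝ≥0∞ := ∑ a : Fin 3, if T (v ++ [a]) then
        ((2 : ℝ≥0∞) ^ (k + 1) + resistAux T d (v ++ [a]))⁻¹ else 0 with hCdef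
    have hres : resistAux T (d + 1) v = C⁻¹ := rfl
    -- ofReal S = 2^(k+1) * C
    have hof : ENNReal.ofReal S = 2 ^ (k + 1) * C := by
      rw [hS, ENNReal.ofReal_sum_of_nonneg (fun a _ => by
        split
        · exact sig_nonneg d _
        · exact le_rfl), hCdef, Finset.mul_sum]
      refine Finset.sum_congr rfl fun a _ => ?_
      split
      · have hIH := bridge d T (v ++ [a])
        have hlen : (v ++ [a]).length = k + 1 := by simp [hk]
        rw [hlen] at hIH
        rw [hIH, div_eq_mul_inv]
      · rw [ENNReal.ofReal_zero, mul_zero]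
    have hCtop : C ≠ ⊤ := by
      intro h
      rw [h, ENNReal.mul_top (by positivity)] at hof
      exact ENNReal.ofReal_ne_top hof
    rw [hsig, hres]
    by_cases hCz : C = 0
    · have hSz : S = 0 := by
        have := hof
        rw [hCz, mul_zero] at this
        have h0 : S ≤ 0 := ENNReal.ofReal_eq_zero.mp this
        linarith
      rw [hSz, zero_div, ENNReal.ofReal_zero, hCz, ENNReal.inv_zero, add_top, ENNReal.div_top]
    · -- S > 0
      have hSpos : 0 < S := by
        rcases lt_or_eq_of_le hS0 with h | h
        · exact h
        · exfalso
          rw [← h, ENNReal.ofReal_zero] at hof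
          exact hCz (by
            rcases mul_eq_zero.mp hof.symm with h' | h'
            · exact absurd h' (by positivity)
            · exact h')
      have h2R : ((2 : ℝ≥0∞) ^ (k + 1)) = ENNReal.ofReal ((2 : ℝ) ^ (k + 1)) := by
        rw [ENNReal.ofReal_pow (by norm_num)]
        norm_num
      have h2Rk : ((2 : ℝ≥0∞) ^ k) = ENNReal.ofReal ((2 : ℝ) ^ k) := by
        rw [ENNReal.ofReal_pow (by norm_num)]
        norm_num
      have hCeq : C = ENNReal.ofReal (S / 2 ^ (k + 1)) := by
        rw [ENNReal.ofReal_div_of_pos (by positivity), ← h2R]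
        exact (ENNReal.eq_div_iff (by positivity) (ENNReal.pow_ne_top ENNReal.ofNat_ne_top)).mpr
          hof.symm
      have hdenpos : (0:ℝ) < S / 2 ^ (k + 1) := by positivity
      rw [hCeq, ← ENNReal.ofReal_inv_of_pos hdenpos]
      rw [h2Rk, ← ENNReal.ofReal_add (by positivity) (by positivity),
        ← ENNReal.ofReal_div_of_pos (by positivity)]
      congr 1
      rw [inv_div]
      field_simp
      ring

/-- Theorem 2.1 (Lyons): the survival probability of Bernoulli(1/2) percolation
on a subtree `T'` of the depth-`n` ternary tree is at most `12 / (2 + R(T'))`,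
where `R(T')` is the effective resistance with edge resistances `2 ^ k`. -/
theorem survivalProb_le_of_resist (n : ℕ) (T : List (Fin 3) → Prop)
    (hT : IsSubtree n T) :
    ENNReal.ofReal (survivalProb n T) ≤ 12 / (2 + resist n T) := by
  obtain ⟨-, hpc, -⟩ := hT
  have hPC : PC T := hpc
  have hb := bridge n T []
  have hTT : (fun l => T ([] ++ l)) = T := by
    funext l
    rw [List.nil_append]
  rw [hTT] at hb
  simp only [List.length_nil, pow_zero] at hb
  -- hb : ofReal (sig n T) = 1 / (1 + resistAux T n [])
  have hmain := main_ind n T hPC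
  have hs0 : 0 ≤ sig n T := sig_nonneg n T
  have hp0 : 0 ≤ survivalProb n T := survivalProb_nonneg n T
  set R : ℝ≥0∞ := resist n T with hR
  have hRaux : resistAux T n [] = R := rfl
  rw [hRaux] at hb
  by_cases hRtop : R = ⊤
  · -- resistance infinite: survival probability is 0
    rw [hRtop] at hb
    rw [add_top, ENNReal.div_top] at hb
    have hsz : sig n T = 0 := le_antisymm (ENNReal.ofReal_eq_zero.mp hb) hs0
    rw [hsz] at hmain
    norm_num at hmain
    have : survivalProb n T = 0 := le_antisymm hmain hp0
    rw [this, ENNReal.ofReal_zero]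
    exact zero_le
  · set r : ℝ := R.toReal with hr
    have hr0 : 0 ≤ r := ENNReal.toReal_nonneg
    have h1R : (1 : ℝ≥0∞) + R = ENNReal.ofReal (1 + r) := by
      rw [ENNReal.ofReal_add (by norm_num) hr0, ENNReal.ofReal_one, hr,
        ENNReal.ofReal_toReal hRtop]
    have h1rpos : (0:ℝ) < 1 + r := by linarith
    have hb' : ENNReal.ofReal (sig n T) = ENNReal.ofReal ((1 + r)⁻¹) := by
      rw [hb, h1R, one_div, ← ENNReal.ofReal_inv_of_pos h1rpos]
    have hsig_eq : sig n T = (1 + r)⁻¹ :=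
      (ENNReal.ofReal_eq_ofReal_iff hs0 (by positivity)).mp hb'
    have hbound : survivalProb n T ≤ 12 / (2 + r) := by
      rw [hsig_eq] at hmain
      have : 12 * (1 + r)⁻¹ / (1 + (1 + r)⁻¹) = 12 / (2 + r) := by
        rw [div_eq_div_iff (by positivity) (by positivity)]
        field_simp
        ring
      rw [this] at hmain
      exact hmain
    calc ENNReal.ofReal (survivalProb n T) ≤ ENNReal.ofReal (12 / (2 + r)) :=
          ENNReal.ofReal_le_ofReal hbound
      _ = 12 / (2 + R) := by
          rw [ENNReal.ofReal_div_of_pos (by positivity), ENNReal.ofReal_ofNat,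
            ENNReal.ofReal_add (by norm_num) hr0, ENNReal.ofReal_ofNat,
            ENNReal.ofReal_toReal hRtop]
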